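/- For every positive integer n and every pair of vectors u, v ∈ ℝⁿ with u ≺ v, define λ ∈ ℝⁿ by λ_i = (v_i − u_i)/Σ_{j=1}^n (v_j − u_j) and β ∈ ℝⁿ by β_i = (u_i·Σ_{j=1}^n v_j − v_i·Σ_{j=1}^n u_j)/Σ_{j=1}^n (v_j − u_j). Then λ_i > 0 for every i, Σ_{i=1}^n λ_i = 1, Σ_{i=1}^n β_i = 0 (so (λ,β) ∈ Ladm_n), and there exist real numbers s < t (namely s = Σ_{j=1}^n u_j and t = Σ_{j=1}^n v_j) such that u = s·λ + β and v = t·λ + β. -/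

import Mathlib

/-- For every `(u,v) ∈ Δ⁺`, the explicitly defined pair `(λ, β)` with
`λ i = (v i − u i)/∑ j (v j − u j)` and
`β i = (u i·∑ j v j − v i·∑ j u j)/∑ j (v j − u j)`
belongs to `Ladm_n` and its half-plane passes through `(u,v)`, with parameters
`s = ∑ j u j` and `t = ∑ j v j`. -/
theorem ladm_pair_through_point (n : ℕ) (hn : 0 < n)
    (u v : Fin n → ℝ) (huv : ∀ i, u i < v i)
    (lam beta : Fin n → ℝ)
    (hlam : ∀ i, lam i = (v i - u i) / ∑ j, (v j - u j))
    (hbeta : ∀ i, beta i = (u i * ∑ j, v j - v i * ∑ j, u j) / ∑ j, (v j - u j)) :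
    (∀ i, 0 < lam i) ∧ (∑ i, lam i = 1) ∧ (∑ i, beta i = 0) ∧
    ∃ s t : ℝ, s = ∑ j, u j ∧ t = ∑ j, v j ∧ s < t ∧
      (∀ i, u i = s * lam i + beta i) ∧ (∀ i, v i = t * lam i + beta i) := by
  have hS : 0 < ∑ j, (v j - u j) :=
    Finset.sum_pos (fun j _ => sub_pos.mpr (huv j)) (by simp [Finset.univ_nonempty_iff, Fin.pos_iff_nonempty.mp hn])
  have hS' : (∑ j, (v j - u j)) ≠ 0 := ne_of_gt hS
  have hsum : ∑ j, (v j - u j) = (∑ j, v j) - ∑ j, u j := by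
    rw [Finset.sum_sub_distrib]
  refine ⟨fun i => by rw [hlam i]; exact div_pos (sub_pos.mpr (huv i)) hS, ?_, ?_, ?_⟩
  · rw [Finset.sum_congr rfl (fun i _ => hlam i), ← Finset.sum_div, div_self hS']
  · rw [Finset.sum_congr rfl (fun i _ => hbeta i), ← Finset.sum_div]
    rw [div_eq_zero_iff]; left
    rw [Finset.sum_sub_distrib, ← Finset.sum_mul, ← Finset.sum_mul]
    ring
  · refine ⟨∑ j, u j, ∑ j, v j, rfl, rfl, ?_, fun i => ?_, fun i => ?_⟩
    · have := sub_pos.mpr hS; linarith [hsum ▸ hS]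
    · rw [hlam i, hbeta i, mul_div_assoc', ← add_div, eq_div_iff hS', hsum]
      ring
    · rw [hlam i, hbeta i, mul_div_assoc', ← add_div, eq_div_iff hS', hsum]
      ring
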